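/- The following exact error representation holds: Z(ω) − Im(Z(ω))/(ωT) − (i/T)·Z′(ω) − Z₀(ω) = ∫_T^∞ K(s)·( e^{−iωs} + (sin(ωs) − ωs e^{−iωs})/(2πn) ) ds. -/

import Mathlib

open Real Complex MeasureTheory intervalIntegral

private lemma inner_integral_eq (ω T : ℝ) (hω : 0 < ω)
    (hexpT : Complex.exp (-2 * Complex.I * ω * T) = 1) (s : ℝ) :
    ∫ t in s..T, (Real.sin (ω * (t - s)) : ℂ) * Complex.exp (-Complex.I * ω * t)
      = Complex.exp (-Complex.I * ω * s) * (T - s) / (2 * Complex.I)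
        - Complex.I * (Real.sin (ω * s) : ℂ) / (2 * ω) := by
  have hωC : (ω : ℂ) ≠ 0 := by exact_mod_cast hω.ne'
  set X := Complex.exp (Complex.I * ω * s) with hX
  set Y := Complex.exp (-Complex.I * ω * s) with hY
  have hXY : X * Y = 1 := by
    rw [hX, hY, ← Complex.exp_add, show Complex.I * ω * s + -Complex.I * ω * s = 0 by ring,
      Complex.exp_zero]
  have key : ∀ t : ℝ, (Real.sin (ω * (t - s)) : ℂ) * Complex.exp (-Complex.I * ω * t)
      = Y / (2 * Complex.I) - X / (2 * Complex.I) * Complex.exp (-2 * Complex.I * ω * t) := by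
    intro t
    have e1 : Complex.exp (-(((ω * (t - s) : ℝ)) : ℂ) * Complex.I) *
        Complex.exp (-Complex.I * ω * t) = X * Complex.exp (-2 * Complex.I * ω * t) := by
      rw [hX, ← Complex.exp_add, ← Complex.exp_add]
      congr 1
      push_cast
      ring
    have e2 : Complex.exp ((((ω * (t - s) : ℝ)) : ℂ) * Complex.I) *
        Complex.exp (-Complex.I * ω * t) = Y := by
      rw [hY, ← Complex.exp_add]
      congr 1
      push_cast
      ring
    have expand : (Real.sin (ω * (t - s)) : ℂ) * Complex.exp (-Complex.I * ω * t)
        = (Complex.exp (-(((ω * (t - s) : ℝ)) : ℂ) * Complex.I) *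
            Complex.exp (-Complex.I * ω * t)
          - Complex.exp ((((ω * (t - s) : ℝ)) : ℂ) * Complex.I) *
            Complex.exp (-Complex.I * ω * t)) * Complex.I / 2 := by
      rw [Complex.ofReal_sin, Complex.sin]
      ring
    rw [expand, e1, e2]
    generalize Complex.exp (-2 * Complex.I * (ω:ℂ) * (t:ℂ)) = F
    have h2I : (2 * Complex.I : ℂ) ≠ 0 := by simp [Complex.I_ne_zero]
    field_simp
    linear_combination (X * F - Y) * Complex.I_sq
  rw [intervalIntegral.integral_congr (g := fun t => Y / (2 * Complex.I)
      - X / (2 * Complex.I) * Complex.exp (-2 * Complex.I * ω * t)) (fun t _ => key t)]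
  have hc : (-2 * Complex.I * ω : ℂ) ≠ 0 := by
    simp [Complex.I_ne_zero, hωC]
  have hints : IntervalIntegrable (fun t : ℝ => X / (2 * Complex.I) *
      Complex.exp (-2 * Complex.I * ω * t)) volume s T := by
    apply Continuous.intervalIntegrable
    fun_prop
  rw [intervalIntegral.integral_sub intervalIntegrable_const hints,
    intervalIntegral.integral_const, intervalIntegral.integral_const_mul]
  have hEI : ∫ t in s..T, Complex.exp (-2 * Complex.I * ω * t)
      = (Complex.exp (-2 * Complex.I * ω * T) - Complex.exp (-2 * Complex.I * ω * s))
        / (-2 * Complex.I * ω) := by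
    have := integral_exp_mul_complex (a := s) (b := T) hc
    simpa [mul_assoc, mul_comm, mul_left_comm] using this
  rw [hEI, hexpT]
  have hYY : Complex.exp (-2 * Complex.I * ω * s) = Y * Y := by
    rw [hY, ← Complex.exp_add]
    congr 1
    ring
  have hsins : (Real.sin (ω * s) : ℂ) = (Y - X) * Complex.I / 2 := by
    rw [Complex.ofReal_sin, Complex.sin, hX, hY]
    congr 3
    · congr 1; push_cast; ring
    · congr 1; push_cast; ring
  rw [hYY, hsins, Complex.real_smul, Complex.ofReal_sub]
  have h2I : (2 * Complex.I : ℂ) ≠ 0 := by simp [Complex.I_ne_zero]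
  field_simp
  ring_nf
  linear_combination 16 * (ω:ℂ) * Complex.I ^ 2 * Y * hXY
    + 16 * (ω:ℂ) * Complex.I ^ 2 * (Complex.I ^ 2 - 1) * (X - Y) * Complex.I_sq
    + (-16 * (ω:ℂ) * Complex.I ^ 2 * Y - Y) * hXY
    + (Y - X) * (Complex.I ^ 2 - 1) * (1 + 16 * (ω:ℂ) * Complex.I ^ 2) * Complex.I_sq

set_option maxHeartbeats 1000000 in
theorem measured_impedance_remainder_formula
    (ω : ℝ) (hω : 0 < ω) (n : ℕ) (hn : 0 < n) (T : ℝ) (hT : T = 2 * π * n / ω)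
    (ρ₀ : ℝ) (K : ℝ → ℝ) (hKmeas : Measurable K)
    (hKint : IntegrableOn (fun s => (1 + s) * |K s|) (Set.Ioi (0 : ℝ)))
    (U : ℝ → ℝ)
    (hU : ∀ t, U t = ρ₀ * Real.sin (ω * t) + ∫ s in (0 : ℝ)..t, K s * Real.sin (ω * (t - s)))
    (Z₀ Z Z' : ℂ)
    (hZ₀ : Z₀ = 2 * Complex.I / (T : ℂ) *
      ∫ t in (0 : ℝ)..T, (U t : ℂ) * Complex.exp (-Complex.I * ω * t))
    (hZ : Z = (ρ₀ : ℂ) + ∫ s in Set.Ioi (0 : ℝ), (K s : ℂ) * Complex.exp (-Complex.I * ω * s))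
    (hZ' : Z' = -Complex.I * ∫ s in Set.Ioi (0 : ℝ),
      (s : ℂ) * (K s : ℂ) * Complex.exp (-Complex.I * ω * s)) :
    Z - (Z.im : ℂ) / ((ω : ℂ) * T) - Complex.I / (T : ℂ) * Z' - Z₀ =
      ∫ s in Set.Ioi T, (K s : ℂ) *
        (Complex.exp (-Complex.I * ω * s) +
          ((Real.sin (ω * s) : ℂ) - (ω : ℂ) * s * Complex.exp (-Complex.I * ω * s)) /
            (2 * (π : ℂ) * n)) := by
  have hπ := Real.pi_pos
  have hn' : (0:ℝ) < n := by exact_mod_cast hn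
  have hT0 : 0 < T := by rw [hT]; positivity
  have hωT : ω * T = 2 * π * n := by rw [hT]; field_simp
  have hωC : (ω:ℂ) ≠ 0 := by exact_mod_cast hω.ne'
  have hTC : (T:ℂ) ≠ 0 := by exact_mod_cast hT0.ne'
  have hωTC : (ω:ℂ) * T = 2 * (π:ℂ) * n := by exact_mod_cast congrArg (Complex.ofReal) hωT
  have h2πn : (2 * (π:ℂ) * n : ℂ) ≠ 0 := by rw [← hωTC]; exact mul_ne_zero hωC hTC
  have hexpT : Complex.exp (-2 * Complex.I * ω * T) = 1 := by
    rw [show (-2 * Complex.I * (ω:ℂ) * (T:ℂ) : ℂ) = ((-2 * (n:ℤ) : ℤ) : ℂ) * (2 * π * Complex.I) by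
      push_cast; linear_combination (-2 * Complex.I) * hωTC]
    exact Complex.exp_int_mul_two_pi_mul_I _
  have hnorme : ∀ t:ℝ, ‖Complex.exp (-Complex.I * ω * t)‖ = 1 := by
    intro t
    rw [Complex.norm_exp,
      show (-Complex.I * (ω:ℂ) * (t:ℝ) : ℂ).re = 0 by simp, Real.exp_zero]
  have hmK : Measurable fun s : ℝ => (K s : ℂ) := Complex.measurable_ofReal.comp hKmeas
  have hme : Measurable fun s : ℝ => Complex.exp (-Complex.I * ω * s) := by fun_prop
  -- integrability on Ioi 0
  have hKabs : IntegrableOn (fun s => |K s|) (Set.Ioi (0:ℝ)) := by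
    apply hKint.mono' hKmeas.abs.aestronglyMeasurable
    rw [ae_restrict_iff' measurableSet_Ioi]
    filter_upwards with s hs
    rw [Real.norm_eq_abs, _root_.abs_abs]
    nlinarith [abs_nonneg (K s), Set.mem_Ioi.mp hs]
  have hsKabs : IntegrableOn (fun s => s * |K s|) (Set.Ioi (0:ℝ)) := by
    apply hKint.mono' (measurable_id.mul hKmeas.abs).aestronglyMeasurable
    rw [ae_restrict_iff' measurableSet_Ioi]
    filter_upwards with s hs
    simp only [Pi.mul_apply, id_eq]
    rw [Real.norm_eq_abs, abs_mul, _root_.abs_abs, abs_of_pos (Set.mem_Ioi.mp hs)]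
    nlinarith [abs_nonneg (K s), Set.mem_Ioi.mp hs]
  have hf₁ : IntegrableOn (fun s : ℝ => (K s:ℂ) * Complex.exp (-Complex.I * ω * s))
      (Set.Ioi (0:ℝ)) := by
    apply hKabs.mono' (hmK.mul hme).aestronglyMeasurable
    filter_upwards with s
    rw [Pi.mul_apply, norm_mul, Complex.norm_real, hnorme, Real.norm_eq_abs, mul_one]
  have hfB : IntegrableOn (fun s : ℝ => K s * Real.sin (ω * s)) (Set.Ioi (0:ℝ)) := by
    apply hKabs.mono' (hKmeas.mul (by fun_prop : Measurable fun s : ℝ => Real.sin (ω * s))).aestronglyMeasurable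
    filter_upwards with s
    rw [Real.norm_eq_abs, Pi.mul_apply, abs_mul]
    exact mul_le_of_le_one_right (abs_nonneg _) (Real.abs_sin_le_one _)
  have hf₃ : IntegrableOn (fun s : ℝ => (s:ℂ) * (K s:ℂ) * Complex.exp (-Complex.I * ω * s))
      (Set.Ioi (0:ℝ)) := by
    apply hsKabs.mono' ((Complex.measurable_ofReal.mul hmK).mul hme).aestronglyMeasurable
    rw [ae_restrict_iff' measurableSet_Ioi]
    filter_upwards with s hs
    rw [Pi.mul_apply, Pi.mul_apply, norm_mul, norm_mul, Complex.norm_real, Complex.norm_real, hnorme, mul_one,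
      Real.norm_eq_abs, Real.norm_eq_abs, abs_of_pos (Set.mem_Ioi.mp hs)]
  have hKabsT : IntegrableOn (fun s => |K s|) (Set.Ioc (0:ℝ) T) :=
    hKabs.mono_set Set.Ioc_subset_Ioi_self
  -- the kernel for Fubini
  set g : ℝ → ℝ → ℂ := fun t s => if s ≤ t then
      (K s:ℂ) * (Real.sin (ω * (t - s)) : ℂ) * Complex.exp (-Complex.I * ω * t) else 0 with hg
  have hgnorm : ∀ t s : ℝ, ‖g t s‖ ≤ |K s| := by
    intro t s
    rw [hg]
    simp only
    split_ifs
    · rw [norm_mul, norm_mul, Complex.norm_real, Complex.norm_real, hnorme, mul_one,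
        Real.norm_eq_abs, Real.norm_eq_abs]
      exact mul_le_of_le_one_right (abs_nonneg _) (Real.abs_sin_le_one _)
    · simp [abs_nonneg]
  have hgmeas : Measurable (Function.uncurry g) := by
    rw [hg]
    apply Measurable.ite (measurableSet_le measurable_snd measurable_fst)
    · exact ((Complex.measurable_ofReal.comp (hKmeas.comp measurable_snd)).mul
        (by fun_prop : Measurable fun p : ℝ × ℝ => (Real.sin (ω * (p.1 - p.2)) : ℂ))).mul
        (by fun_prop)
    · exact measurable_const
  have hgint : Integrable (Function.uncurry g)
      ((volume.restrict (Set.Ioc (0:ℝ) T)).prod (volume.restrict (Set.Ioc (0:ℝ) T))) := by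
    have hone : Integrable (fun _ : ℝ => (1:ℝ)) (volume.restrict (Set.Ioc (0:ℝ) T)) :=
      integrableOn_const measure_Ioc_lt_top.ne
    apply (hone.mul_prod hKabsT).mono' hgmeas.aestronglyMeasurable
    filter_upwards with p
    rw [one_mul]
    exact hgnorm p.1 p.2
  have hgt : ∀ t : ℝ, IntegrableOn (fun s => g t s) (Set.Ioc (0:ℝ) T) := by
    intro t
    apply hKabsT.mono' (hgmeas.comp (measurable_const.prodMk measurable_id)).aestronglyMeasurable
    filter_upwards with s
    exact hgnorm t s
  have hgs : ∀ s : ℝ, IntegrableOn (fun t => g t s) (Set.Ioc (0:ℝ) T) := by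
    intro s
    have hcost : Integrable (fun _ : ℝ => |K s|) (volume.restrict (Set.Ioc (0:ℝ) T)) :=
      integrableOn_const measure_Ioc_lt_top.ne
    apply hcost.mono' (hgmeas.comp (measurable_id.prodMk measurable_const)).aestronglyMeasurable
    filter_upwards with t
    exact hgnorm t s
  have hswap : (∫ t in Set.Ioc (0:ℝ) T, ∫ s in Set.Ioc (0:ℝ) T, g t s)
      = ∫ s in Set.Ioc (0:ℝ) T, ∫ t in Set.Ioc (0:ℝ) T, g t s :=
    integral_integral_swap hgint
  have hleft : ∀ t ∈ Set.Ioc (0:ℝ) T, (∫ s in Set.Ioc (0:ℝ) T, g t s)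
      = ((∫ s in (0:ℝ)..t, K s * Real.sin (ω * (t - s)) : ℝ) : ℂ)
        * Complex.exp (-Complex.I * ω * t) := by
    intro t ht
    rw [← Set.Ioc_union_Ioc_eq_Ioc ht.1.le ht.2,
      setIntegral_union (Set.Ioc_disjoint_Ioc_of_le le_rfl) measurableSet_Ioc
        ((hgt t).mono_set (Set.Ioc_subset_Ioc_right ht.2))
        ((hgt t).mono_set (Set.Ioc_subset_Ioc_left ht.1.le))]
    have h2 : ∫ s in Set.Ioc t T, g t s = 0 := by
      rw [setIntegral_congr_fun measurableSet_Ioc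
        (fun s hs => by rw [hg]; simp only; rw [if_neg (not_le.mpr hs.1)] : Set.EqOn (fun s => g t s) (fun _ => (0:ℂ)) (Set.Ioc t T))]
      exact integral_zero _ _
    have h1 : ∫ s in Set.Ioc 0 t, g t s
        = ∫ s in Set.Ioc 0 t, ((K s * Real.sin (ω * (t - s)) : ℝ) : ℂ)
          * Complex.exp (-Complex.I * ω * t) := by
      apply setIntegral_congr_fun measurableSet_Ioc
      intro s hs
      rw [hg]
      simp only
      rw [if_pos hs.2]
      push_cast
      ring
    rw [h1, h2, add_zero, intervalIntegral.integral_of_le ht.1.le, MeasureTheory.integral_mul_const,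
      show ∫ a in Set.Ioc (0:ℝ) t, ((K a * Real.sin (ω * (t - a)) : ℝ) : ℂ)
        = ((∫ x in Set.Ioc (0:ℝ) t, K x * Real.sin (ω * (t - x)) : ℝ) : ℂ) from
        _root_.integral_ofReal]
  have hright : ∀ s ∈ Set.Ioc (0:ℝ) T, (∫ t in Set.Ioc (0:ℝ) T, g t s)
      = (K s:ℂ) * (Complex.exp (-Complex.I * ω * s) * (T - s) / (2 * Complex.I)
        - Complex.I * (Real.sin (ω * s) : ℂ) / (2 * ω)) := by
    intro s hs
    rw [← Set.Ioc_union_Ioc_eq_Ioc hs.1.le hs.2,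
      setIntegral_union (Set.Ioc_disjoint_Ioc_of_le le_rfl) measurableSet_Ioc
        ((hgs s).mono_set (Set.Ioc_subset_Ioc_right hs.2))
        ((hgs s).mono_set (Set.Ioc_subset_Ioc_left hs.1.le))]
    have h0 : ∫ t in Set.Ioc (0:ℝ) s, g t s = 0 := by
      have hae : ∀ᵐ t ∂volume, t ∈ Set.Ioc (0:ℝ) s → g t s = (fun _ => (0:ℂ)) t := by
        filter_upwards [compl_mem_ae_iff.mpr (volume_singleton (a := s))] with t hts ht
        rw [hg]
        simp only
        rw [if_neg]
        intro hle
        exact hts (le_antisymm ht.2 hle)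
      rw [setIntegral_congr_ae measurableSet_Ioc hae]
      exact integral_zero _ _
    have h1 : ∫ t in Set.Ioc s T, g t s
        = (K s:ℂ) * ∫ t in Set.Ioc s T,
          (Real.sin (ω * (t - s)) : ℂ) * Complex.exp (-Complex.I * ω * t) := by
      rw [← MeasureTheory.integral_const_mul]
      apply setIntegral_congr_fun measurableSet_Ioc
      intro t ht
      rw [hg]
      simp only
      rw [if_pos ht.1.le]
      ring
    rw [h0, h1, zero_add, ← intervalIntegral.integral_of_le hs.2,
      inner_integral_eq ω T hω hexpT s]
  have hsinTe : ∫ t in Set.Ioc (0:ℝ) T, (Real.sin (ω * t) : ℂ) * Complex.exp (-Complex.I * ω * t)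
      = T / (2 * Complex.I) := by
    have h := inner_integral_eq ω T hω hexpT 0
    rw [intervalIntegral.integral_of_le hT0.le] at h
    simpa using h
  have hUeq : Set.EqOn (fun t : ℝ => (U t : ℂ) * Complex.exp (-Complex.I * ω * t))
      (fun t => (ρ₀:ℂ) * ((Real.sin (ω * t) : ℂ) * Complex.exp (-Complex.I * ω * t))
        + ∫ s in Set.Ioc (0:ℝ) T, g t s) (Set.Ioc (0:ℝ) T) := by
    intro t ht
    simp only
    rw [hleft t ht, hU t]
    push_cast
    ring
  have hi1 : IntegrableOn (fun t : ℝ => (ρ₀:ℂ) * ((Real.sin (ω * t) : ℂ)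
      * Complex.exp (-Complex.I * ω * t))) (Set.Ioc (0:ℝ) T) :=
    Continuous.integrableOn_Ioc (by fun_prop)
  have hi2 : Integrable (fun t => ∫ s in Set.Ioc (0:ℝ) T, g t s)
      (volume.restrict (Set.Ioc (0:ℝ) T)) := hgint.integral_prod_left
  have hZ₀2 : Z₀ = 2 * Complex.I / T * ((ρ₀:ℂ) * (T / (2 * Complex.I))
      + ∫ s in Set.Ioc (0:ℝ) T, ∫ t in Set.Ioc (0:ℝ) T, g t s) := by
    rw [hZ₀, intervalIntegral.integral_of_le hT0.le,
      setIntegral_congr_fun measurableSet_Ioc hUeq, integral_add hi1 hi2,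
      MeasureTheory.integral_const_mul, hsinTe, hswap]
  have h2I : (2 * Complex.I : ℂ) ≠ 0 := by simp [Complex.I_ne_zero]
  have hmulw : Set.EqOn (fun s : ℝ => 2 * Complex.I / T * ((K s:ℂ)
        * (Complex.exp (-Complex.I * ω * s) * (T - s) / (2 * Complex.I)
          - Complex.I * (Real.sin (ω * s) : ℂ) / (2 * ω))))
      (fun s : ℝ => (K s : ℂ) * (Complex.exp (-Complex.I * ω * s) +
        ((Real.sin (ω * s) : ℂ) - (ω : ℂ) * s * Complex.exp (-Complex.I * ω * s)) /
          (2 * (π : ℂ) * n))) (Set.Ioc (0:ℝ) T) := by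
    intro s _
    simp only
    rw [← hωTC]
    field_simp
    ring_nf
    linear_combination (-(K s : ℂ) * (Real.sin (ω * s) : ℂ))
      * Complex.I_sq
  have hZ₀3 : Z₀ = (ρ₀ : ℂ) + ∫ s in Set.Ioc (0:ℝ) T, (K s : ℂ) *
      (Complex.exp (-Complex.I * ω * s) +
        ((Real.sin (ω * s) : ℂ) - (ω : ℂ) * s * Complex.exp (-Complex.I * ω * s)) /
          (2 * (π : ℂ) * n)) := by
    rw [hZ₀2, setIntegral_congr_fun measurableSet_Ioc hright, mul_add]
    congr 1
    · field_simp
    · rw [← MeasureTheory.integral_const_mul]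
      exact setIntegral_congr_fun measurableSet_Ioc hmulw
  -- cast of the sine integrand
  have hfBC : IntegrableOn (fun s : ℝ => ((K s * Real.sin (ω * s) : ℝ) : ℂ))
      (Set.Ioi (0:ℝ)) := by
    apply hKabs.mono' (Complex.measurable_ofReal.comp
      (hKmeas.mul (by fun_prop : Measurable fun s : ℝ => Real.sin (ω * s)))).aestronglyMeasurable
    filter_upwards with s
    simp only [Function.comp_apply, Pi.mul_apply]
    rw [Complex.norm_real, Real.norm_eq_abs, abs_mul]
    exact mul_le_of_le_one_right (abs_nonneg _) (Real.abs_sin_le_one _)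
  have hwfun : ∀ s : ℝ, (K s : ℂ) * (Complex.exp (-Complex.I * ω * s) +
      ((Real.sin (ω * s) : ℂ) - (ω : ℂ) * s * Complex.exp (-Complex.I * ω * s)) /
        (2 * (π : ℂ) * n))
      = (K s:ℂ) * Complex.exp (-Complex.I * ω * s)
        + (2 * (π:ℂ) * n)⁻¹ * ((K s * Real.sin (ω * s) : ℝ) : ℂ)
        - (ω:ℂ) / (2 * (π:ℂ) * n) * ((s:ℂ) * (K s:ℂ) * Complex.exp (-Complex.I * ω * s)) := by
    intro s
    push_cast
    field_simp
    ring
  have hdecomp : ∀ S : Set ℝ,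
      IntegrableOn (fun s : ℝ => (K s:ℂ) * Complex.exp (-Complex.I * ω * s)) S →
      IntegrableOn (fun s : ℝ => ((K s * Real.sin (ω * s) : ℝ) : ℂ)) S →
      IntegrableOn (fun s : ℝ => (s:ℂ) * (K s:ℂ) * Complex.exp (-Complex.I * ω * s)) S →
      (∫ s in S, (K s : ℂ) * (Complex.exp (-Complex.I * ω * s) +
        ((Real.sin (ω * s) : ℂ) - (ω : ℂ) * s * Complex.exp (-Complex.I * ω * s)) /
          (2 * (π : ℂ) * n)))
      = (∫ s in S, (K s:ℂ) * Complex.exp (-Complex.I * ω * s))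
        + (2 * (π:ℂ) * n)⁻¹ * ((∫ s in S, K s * Real.sin (ω * s) : ℝ) : ℂ)
        - (ω:ℂ) / (2 * (π:ℂ) * n)
          * ∫ s in S, (s:ℂ) * (K s:ℂ) * Complex.exp (-Complex.I * ω * s) := by
    intro S h1 h2 h3
    have e3 : IntegrableOn (fun s : ℝ => (2*(π:ℂ)*n)⁻¹ * ((K s * Real.sin (ω*s) : ℝ) : ℂ)) S :=
      h2.const_mul _
    have e1 : IntegrableOn (fun s : ℝ => (K s:ℂ) * Complex.exp (-Complex.I*ω*s)
        + (2*(π:ℂ)*n)⁻¹ * ((K s * Real.sin (ω*s) : ℝ) : ℂ)) S := h1.add e3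
    have e2 : IntegrableOn (fun s : ℝ => (ω:ℂ)/(2*(π:ℂ)*n)
        * ((s:ℂ) * (K s:ℂ) * Complex.exp (-Complex.I*ω*s))) S := h3.const_mul _
    rw [integral_congr_ae (Filter.Eventually.of_forall hwfun), integral_sub e1 e2,
      integral_add h1 e3, MeasureTheory.integral_const_mul, MeasureTheory.integral_const_mul,
      show (∫ s in S, ((K s * Real.sin (ω * s) : ℝ) : ℂ))
        = ((∫ s in S, K s * Real.sin (ω * s) : ℝ) : ℂ) from _root_.integral_ofReal]
  have hsplit : ∀ (f : ℝ → ℂ), IntegrableOn f (Set.Ioi (0:ℝ)) →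
      (∫ s in Set.Ioi (0:ℝ), f s) = (∫ s in Set.Ioc (0:ℝ) T, f s) + ∫ s in Set.Ioi T, f s := by
    intro f hf
    rw [← Set.Ioc_union_Ioi_eq_Ioi hT0.le,
      setIntegral_union Set.Ioc_disjoint_Ioi_same measurableSet_Ioi
        (hf.mono_set Set.Ioc_subset_Ioi_self) (hf.mono_set (Set.Ioi_subset_Ioi hT0.le))]
  have hBs : (∫ s in Set.Ioi (0:ℝ), K s * Real.sin (ω * s))
      = (∫ s in Set.Ioc (0:ℝ) T, K s * Real.sin (ω * s))
        + ∫ s in Set.Ioi T, K s * Real.sin (ω * s) := by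
    rw [← Set.Ioc_union_Ioi_eq_Ioi hT0.le,
      setIntegral_union Set.Ioc_disjoint_Ioi_same measurableSet_Ioi
        (hfB.mono_set Set.Ioc_subset_Ioi_self) (hfB.mono_set (Set.Ioi_subset_Ioi hT0.le))]
  have hAs := hsplit _ hf₁
  have hCs := hsplit _ hf₃
  have hZim : (Z.im : ℝ) = -∫ s in Set.Ioi (0:ℝ), K s * Real.sin (ω * s) := by
    have him : (∫ s in Set.Ioi (0:ℝ), ((K s:ℂ) * Complex.exp (-Complex.I*ω*s)).im)
        = (∫ s in Set.Ioi (0:ℝ), (K s:ℂ) * Complex.exp (-Complex.I*ω*s)).im :=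
      integral_im hf₁
    rw [hZ, Complex.add_im, Complex.ofReal_im, zero_add, ← him, ← MeasureTheory.integral_neg]
    refine integral_congr_ae (Filter.Eventually.of_forall fun s => ?_)
    simp only
    have hexpim : (Complex.exp (-Complex.I * (ω:ℂ) * (s:ℝ))).im = -Real.sin (ω * s) := by
      rw [show (-Complex.I * (ω:ℂ) * (s:ℝ) : ℂ) = ((-(ω * s) : ℝ) : ℂ) * Complex.I by
        push_cast; ring, Complex.exp_ofReal_mul_I_im, Real.sin_neg]
    rw [Complex.mul_im, Complex.ofReal_im, Complex.ofReal_re, hexpim]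
    ring
  have hZimC : ((Z.im : ℝ) : ℂ)
      = -((∫ s in Set.Ioi (0:ℝ), K s * Real.sin (ω * s) : ℝ) : ℂ) := by
    rw [hZim]; push_cast; ring
  have hIZ' : Complex.I / (T:ℂ) * Z'
      = (∫ s in Set.Ioi (0:ℝ), (s:ℂ) * (K s:ℂ) * Complex.exp (-Complex.I * ω * s)) / T := by
    rw [hZ']
    generalize (∫ s in Set.Ioi (0:ℝ), (s:ℂ) * (K s:ℂ) * Complex.exp (-Complex.I * ω * s)) = C
    field_simp
    linear_combination (-C) * Complex.I_sq
  rw [hZimC, hZ, hIZ', hZ₀3,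
    hdecomp _ (hf₁.mono_set (Set.Ioi_subset_Ioi hT0.le))
      (hfBC.mono_set (Set.Ioi_subset_Ioi hT0.le)) (hf₃.mono_set (Set.Ioi_subset_Ioi hT0.le)),
    hdecomp _ (hf₁.mono_set Set.Ioc_subset_Ioi_self)
      (hfBC.mono_set Set.Ioc_subset_Ioi_self) (hf₃.mono_set Set.Ioc_subset_Ioi_self),
    hAs, hBs, hCs, ← hωTC]
  push_cast
  field_simp
  ring
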